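/- If Γ̃ is a minimal subfamily for Mod_{p,σ}(Γ) (1 < p < ∞), then the usage vectors {N(γ,·) : γ ∈ Γ̃} are linearly independent in ℝ^E; in particular |Γ̃| ≤ |E|. -/

import Mathlib

private lemma farkas {E : Type*} [Fintype E] :
    ∀ (n : ℕ) (a : Fin n → E → ℝ) (g : E → ℝ),
      (∃ lam : Fin n → ℝ, (∀ i, 0 ≤ lam i) ∧ ∀ e, g e = ∑ i, lam i * a i e) ∨
      (∃ d : E → ℝ, (∀ i, 0 ≤ ∑ e, a i e * d e) ∧ ∑ e, g e * d e < 0) := by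
  intro n
  induction n with
  | zero =>
    intro a g
    by_cases hg : g = 0
    · exact Or.inl ⟨0, fun i => le_refl _, fun e => by simp [hg]⟩
    · refine Or.inr ⟨fun e => -g e, fun i => i.elim0, ?_⟩
      have hne : ∃ e, g e ≠ 0 := by
        by_contra h
        push_neg at h
        exact hg (funext h)
      obtain ⟨e0, he0⟩ := hne
      have : 0 < ∑ e, g e * g e := by
        apply Finset.sum_pos' (fun e _ => mul_self_nonneg _)
        exact ⟨e0, Finset.mem_univ _, mul_self_pos.mpr he0⟩
      have : ∑ e, g e * -g e = -∑ e, g e * g e := by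
        simp [Finset.sum_neg_distrib]
      linarith [this]
      
  | succ n ih =>
    intro a g
    set b : Fin n → E → ℝ := fun i => a i.castSucc with hbdef
    set v : E → ℝ := a (Fin.last n) with hvdef
    rcases ih b g with ⟨lam, hnn, hsum⟩ | ⟨d, hd, hgd⟩
    · left
      refine ⟨Fin.snoc lam 0, ?_, ?_⟩
      · intro i
        induction i using Fin.lastCases with
        | last => simp
        | cast i => simpa using hnn i
      · intro e
        rw [Fin.sum_univ_castSucc]
        simpa using hsum e
    · by_cases hvd : 0 ≤ ∑ e, v e * d e
      · right
        refine ⟨d, ?_, hgd⟩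
        intro i
        induction i using Fin.lastCases with
        | last => exact hvd
        | cast i => exact hd i
      · push_neg at hvd
        have hD : (∑ e, v e * d e) ≠ 0 := ne_of_lt hvd
        set D : ℝ := ∑ e, v e * d e with hDdef
        set b' : Fin n → E → ℝ := fun i e => b i e - ((∑ e', b i e' * d e') / D) * v e with hb'def
        set g' : E → ℝ := fun e => g e - ((∑ e', g e' * d e') / D) * v e with hg'def
        have expand : ∀ (x y : E → ℝ) (c : ℝ),
            ∑ e, (x e - c * v e) * y e = (∑ e, x e * y e) - c * ∑ e, v e * y e := by
          intro x y c
          rw [Finset.mul_sum, ← Finset.sum_sub_distrib]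
          apply Finset.sum_congr rfl
          intro e _
          ring
        rcases ih b' g' with ⟨lam, hnn, hsum⟩ | ⟨d', hd', hgd'⟩
        · left
          set μ : ℝ := ((∑ e, g e * d e) - ∑ i, lam i * ∑ e, b i e * d e) / D with hμdef
          have hμ0 : 0 ≤ μ := by
            have h1 : 0 ≤ ∑ i, lam i * ∑ e, b i e * d e :=
              Finset.sum_nonneg fun i _ => mul_nonneg (hnn i) (hd i)
            have h2 : (∑ e, g e * d e) - ∑ i, lam i * ∑ e, b i e * d e ≤ 0 := by linarith
            rw [hμdef]
            rw [div_nonneg_iff]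
            right
            exact ⟨h2, hvd.le⟩
          refine ⟨Fin.snoc lam μ, ?_, ?_⟩
          · intro i
            induction i using Fin.lastCases with
            | last => simpa using hμ0
            | cast i => simpa using hnn i
          · intro e
            rw [Fin.sum_univ_castSucc]
            simp only [Fin.snoc_castSucc, Fin.snoc_last]
            have h1 := hsum e
            have h2 : ∑ i, lam i * b' i e
                = (∑ i, lam i * b i e) - (∑ i, lam i * ∑ e', b i e' * d e') * (v e / D) := by
              rw [Finset.sum_mul, ← Finset.sum_sub_distrib]
              apply Finset.sum_congr rfl
              intro i _
              simp only [hb'def]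
              ring
            simp only [hg'def] at h1
            rw [h2] at h1
            rw [hμdef]
            field_simp at h1 ⊢
            linarith [h1]
        · right
          set d'' : E → ℝ := fun e => d' e - ((∑ e', v e' * d' e') / D) * d e with hd''def
          have key : ∀ x : E → ℝ,
              ∑ e, x e * d'' e = (∑ e, x e * d' e) - ((∑ e', v e' * d' e') / D) * ∑ e, x e * d e := by
            intro x
            rw [Finset.mul_sum, ← Finset.sum_sub_distrib]
            apply Finset.sum_congr rfl
            intro e _
            simp only [hd''def]
            ring
          have keyb : ∀ x : E → ℝ,
              ∑ e, (x e - ((∑ e', x e' * d e') / D) * v e) * d' e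
              = (∑ e, x e * d' e) - ((∑ e', x e' * d e') / D) * ∑ e, v e * d' e := by
            intro x
            rw [Finset.mul_sum, ← Finset.sum_sub_distrib]
            apply Finset.sum_congr rfl
            intro e _
            ring
          refine ⟨d'', ?_, ?_⟩
          · intro i
            induction i using Fin.lastCases with
            | last =>
              rw [← hvdef, key v]
              field_simp
              rw [← hDdef, sub_self, mul_zero, zero_div]
            | cast i =>
              have h1 := hd' i
              simp only [hb'def] at h1
              rw [keyb (b i)] at h1
              rw [show a i.castSucc = b i from rfl, key (b i)]
              have : (∑ e', b i e' * d e') / D * ∑ e, v e * d' e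
                  = (∑ e', v e' * d' e') / D * ∑ e, b i e * d e := by
                field_simp
              linarith [h1, this]
          · have h1 := hgd'
            simp only [hg'def] at h1
            rw [keyb g] at h1
            rw [key g]
            have : (∑ e', g e' * d e') / D * ∑ e, v e * d' e
                = (∑ e', v e' * d' e') / D * ∑ e, g e * d e := by
              field_simp
            linarith [h1, this]

private lemma rpow_tangent {p : ℝ} (hp : 1 < p) {x y : ℝ} (hx : 0 ≤ x) (hy : 0 ≤ y) :
    x ^ p + p * x ^ (p - 1) * (y - x) ≤ y ^ p := by
  rcases eq_or_lt_of_le hx with h0 | h0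
  · rw [← h0, Real.zero_rpow (by linarith : p ≠ 0), Real.zero_rpow (by linarith : p - 1 ≠ 0)]
    simpa using Real.rpow_nonneg hy p
  · have hs : -1 ≤ y / x - 1 := by
      have : 0 ≤ y / x := div_nonneg hy h0.le
      linarith
    have B := one_add_mul_self_le_rpow_one_add hs hp.le
    have h1 : (1 : ℝ) + (y / x - 1) = y / x := by ring
    rw [h1, Real.div_rpow hy h0.le] at B
    have hxp : 0 < x ^ p := Real.rpow_pos_of_pos h0 p
    have B2 : (1 + p * (y / x - 1)) * x ^ p ≤ y ^ p := by
      have := mul_le_mul_of_nonneg_right B hxp.le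
      rwa [div_mul_cancel₀ _ hxp.ne'] at this
    have hxx : x ^ p = x ^ (p - 1) * x := by
      rw [← Real.rpow_add_one h0.ne' (p - 1), sub_add_cancel]
    calc x ^ p + p * x ^ (p - 1) * (y - x)
        = (1 + p * (y / x - 1)) * x ^ p := by
          rw [hxx]; field_simp
      _ ≤ y ^ p := B2

/-- The `p`-modulus (as a real infimum) of a family `Γ` of usage vectors. -/
noncomputable def pMod {E : Type*} [Fintype E] (σ : E → ℝ) (p : ℝ) (Γ : Set (E → ℝ)) : ℝ :=
  sInf {x : ℝ | ∃ ρ : E → ℝ, (∀ e, 0 ≤ ρ e) ∧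
    (∀ γ ∈ Γ, 1 ≤ ∑ e, γ e * ρ e) ∧ x = ∑ e, σ e * |ρ e| ^ p}

/-- the usage vectors of a minimal subfamily are linearly independent;
in particular its cardinality is at most `|E|`. -/
theorem stmt11 {E : Type*} [Fintype E]
    (σ : E → ℝ) (hσ : ∀ e, 0 < σ e)
    (p : ℝ) (hp : 1 < p)
    (Γ : Set (E → ℝ)) (hfin : Γ.Finite)
    (hΓ : ∀ γ ∈ Γ, (∀ e, 0 ≤ γ e) ∧ γ ≠ 0)
    (Γt : Set (E → ℝ)) (hsub : Γt ⊆ Γ)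
    (heq : pMod σ p Γt = pMod σ p Γ)
    (hmin : ∀ γ ∈ Γt, pMod σ p (Γt \ {γ}) < pMod σ p Γ) :
    LinearIndependent ℝ (fun γ : Γt => (γ : E → ℝ)) ∧
      Γt.ncard ≤ Fintype.card E := by
  classical
  have hp0 : (0:ℝ) < p := lt_trans zero_lt_one hp
  set J : (E → ℝ) → ℝ := fun ρ => ∑ e, σ e * |ρ e| ^ p with hJdef
  set A : Set (E → ℝ) → Set ℝ := fun Γ' => {x : ℝ | ∃ ρ : E → ℝ, (∀ e, 0 ≤ ρ e) ∧
    (∀ γ ∈ Γ', 1 ≤ ∑ e, γ e * ρ e) ∧ x = J ρ} with hAdef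
  have hpm : ∀ Γ' : Set (E → ℝ), pMod σ p Γ' = sInf (A Γ') := fun _ => rfl
  have hJnonneg : ∀ ρ : E → ℝ, 0 ≤ J ρ := fun ρ =>
    Finset.sum_nonneg fun e _ => mul_nonneg (hσ e).le (Real.rpow_nonneg (abs_nonneg _) p)
  have hbdd : ∀ Γ' : Set (E → ℝ), BddBelow (A Γ') := by
    intro Γ'
    refine ⟨0, ?_⟩
    rintro x ⟨ρ, h1, h2, rfl⟩
    exact hJnonneg ρ
  have htfin : Γt.Finite := hfin.subset hsub
  have hγnn : ∀ γ ∈ Γt, ∀ e, 0 ≤ γ e := fun γ hγ => (hΓ γ (hsub hγ)).1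
  have hpos : ∀ γ ∈ Γt, 0 < ∑ e, γ e := by
    intro γ hγ
    obtain ⟨hge, hne⟩ := hΓ γ (hsub hγ)
    have hex : ∃ e, γ e ≠ 0 := by
      by_contra h; push_neg at h; exact hne (funext h)
    obtain ⟨e0, he0⟩ := hex
    exact Finset.sum_pos' (fun e _ => hge e)
      ⟨e0, Finset.mem_univ _, lt_of_le_of_ne (hge e0) (Ne.symm he0)⟩
  set R : ℝ := ∑ γ ∈ htfin.toFinset, (∑ e, γ e)⁻¹ with hRdef
  have hR0 : 0 ≤ R := Finset.sum_nonneg fun γ hγ =>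
    inv_nonneg.mpr (hpos γ (htfin.mem_toFinset.mp hγ)).le
  set ρ0 : E → ℝ := fun _ => R with hρ0def
  have hρ0nn : ∀ e, 0 ≤ ρ0 e := fun _ => hR0
  have hρ0feas : ∀ γ ∈ Γt, 1 ≤ ∑ e, γ e * ρ0 e := by
    intro γ hγ
    have h1 : ∑ e, γ e * ρ0 e = (∑ e, γ e) * R := by
      rw [Finset.sum_mul]
    have h2 : (∑ e, γ e)⁻¹ ≤ R :=
      Finset.single_le_sum (f := fun γ' : E → ℝ => (∑ e, γ' e)⁻¹)
        (fun γ' hγ' => inv_nonneg.mpr (hpos γ' (htfin.mem_toFinset.mp hγ')).le)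
        (htfin.mem_toFinset.mpr hγ)
    rw [h1]
    calc (1:ℝ) = (∑ e, γ e) * (∑ e, γ e)⁻¹ := (mul_inv_cancel₀ (hpos γ hγ).ne').symm
      _ ≤ (∑ e, γ e) * R := mul_le_mul_of_nonneg_left h2 (hpos γ hγ).le
  have hAne : ∀ Γ'' : Set (E → ℝ), Γ'' ⊆ Γt → (A Γ'').Nonempty := by
    intro Γ'' hss
    refine ⟨J ρ0, ?_⟩
    exact ⟨ρ0, hρ0nn, fun γ hγ => hρ0feas γ (hss hγ), rfl⟩
  -- the compact feasible sublevel set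
  set K : Set (E → ℝ) :=
    {ρ | (∀ e, 0 ≤ ρ e) ∧ (∀ γ ∈ Γt, 1 ≤ ∑ e, γ e * ρ e) ∧ J ρ ≤ J ρ0} with hKdef
  have hρ0K : ρ0 ∈ K := ⟨hρ0nn, hρ0feas, le_refl _⟩
  have hJcont : Continuous J := by
    apply continuous_finset_sum
    intro e _
    exact continuous_const.mul
      ((continuous_abs.comp (continuous_apply e)).rpow_const (fun x => Or.inr hp0.le))
  have hKcl : IsClosed K := by
    have h1 : IsClosed {ρ : E → ℝ | ∀ e, 0 ≤ ρ e} := by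
      rw [Set.setOf_forall]
      exact isClosed_iInter fun e => isClosed_le continuous_const (continuous_apply e)
    have h2 : IsClosed {ρ : E → ℝ | ∀ γ ∈ Γt, 1 ≤ ∑ e, γ e * ρ e} := by
      rw [Set.setOf_forall]
      refine isClosed_iInter fun γ => ?_
      rw [Set.setOf_forall]
      refine isClosed_iInter fun hγ => ?_
      exact isClosed_le continuous_const
        (continuous_finset_sum _ fun e _ => continuous_const.mul (continuous_apply e))
    have h3 : IsClosed {ρ : E → ℝ | J ρ ≤ J ρ0} := isClosed_le hJcont continuous_const
    have hKeq : K = {ρ : E → ℝ | ∀ e, 0 ≤ ρ e} ∩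
        ({ρ : E → ℝ | ∀ γ ∈ Γt, 1 ≤ ∑ e, γ e * ρ e} ∩ {ρ : E → ℝ | J ρ ≤ J ρ0}) := rfl
    rw [hKeq]
    exact h1.inter (h2.inter h3)
  have hKcp : IsCompact K := by
    apply IsCompact.of_isClosed_subset
      (isCompact_univ_pi (fun e : E => isCompact_Icc (a := (0:ℝ)) (b := (J ρ0 / σ e) ^ (1/p))))
      hKcl
    rintro ρ ⟨hnn, hfeas, hle⟩
    rw [Set.mem_univ_pi]
    intro e
    refine ⟨hnn e, ?_⟩
    have h1 : σ e * |ρ e| ^ p ≤ J ρ0 :=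
      le_trans (Finset.single_le_sum (f := fun e' => σ e' * |ρ e'| ^ p)
        (fun e' _ => mul_nonneg (hσ e').le (Real.rpow_nonneg (abs_nonneg _) _))
        (Finset.mem_univ e)) hle
    have h2 : |ρ e| ^ p ≤ J ρ0 / σ e := (le_div_iff₀' (hσ e)).mpr h1
    have h3 : (|ρ e| ^ p) ^ (1/p) ≤ (J ρ0 / σ e) ^ (1/p) :=
      Real.rpow_le_rpow (Real.rpow_nonneg (abs_nonneg _) _) h2 (by positivity)
    rw [← Real.rpow_mul (abs_nonneg _), mul_one_div, div_self hp0.ne', Real.rpow_one] at h3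
    exact le_trans (le_abs_self _) h3
  obtain ⟨ρs, hρsK, hmins⟩ := hKcp.exists_isMinOn ⟨ρ0, hρ0K⟩ hJcont.continuousOn
  obtain ⟨hρsnn, hρsfeas, hρsle⟩ := hρsK
  have hminJ : ∀ ρ ∈ K, J ρs ≤ J ρ := fun ρ hρ => hmins hρ
  have hval : pMod σ p Γt = J ρs := by
    rw [hpm]
    apply le_antisymm
    · exact csInf_le (hbdd Γt) ⟨ρs, hρsnn, hρsfeas, rfl⟩
    · apply le_csInf (hAne Γt (Set.Subset.refl Γt))
      rintro x ⟨ρ, hnn, hfeas, rfl⟩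
      by_cases hc : J ρ ≤ J ρ0
      · exact hminJ ρ ⟨hnn, hfeas, hc⟩
      · push_neg at hc; linarith
  -- convexity of the energy
  have hJconv : ∀ ρ1 ρ2 : E → ℝ, (∀ e, 0 ≤ ρ1 e) → (∀ e, 0 ≤ ρ2 e) → ∀ t : ℝ, 0 ≤ t → t ≤ 1 →
      J (fun e => (1 - t) * ρ1 e + t * ρ2 e) ≤ (1 - t) * J ρ1 + t * J ρ2 := by
    intro ρ1 ρ2 h1 h2 t ht0 ht1
    simp only [hJdef]
    rw [Finset.mul_sum, Finset.mul_sum, ← Finset.sum_add_distrib]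
    apply Finset.sum_le_sum
    intro e _
    have hcv := (convexOn_rpow hp.le).2 (Set.mem_Ici.mpr (h1 e)) (Set.mem_Ici.mpr (h2 e))
      (by linarith : (0:ℝ) ≤ 1 - t) ht0 (by ring)
    simp only [smul_eq_mul] at hcv
    rw [abs_of_nonneg (add_nonneg (mul_nonneg (by linarith) (h1 e)) (mul_nonneg ht0 (h2 e))),
      abs_of_nonneg (h1 e), abs_of_nonneg (h2 e)]
    calc σ e * ((1 - t) * ρ1 e + t * ρ2 e) ^ p
        ≤ σ e * ((1 - t) * ρ1 e ^ p + t * ρ2 e ^ p) :=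
          mul_le_mul_of_nonneg_left hcv (hσ e).le
      _ = (1 - t) * (σ e * ρ1 e ^ p) + t * (σ e * ρ2 e ^ p) := by ring
  -- all constraints are active at the minimizer
  have hactive : ∀ γ0 ∈ Γt, ∑ e, γ0 e * ρs e = 1 := by
    intro γ0 hγ0
    by_contra hne
    have hgt : 1 < ∑ e, γ0 e * ρs e := lt_of_le_of_ne (hρsfeas γ0 hγ0) (Ne.symm hne)
    have hlt : sInf (A (Γt \ {γ0})) < J ρs := by
      have h := hmin γ0 hγ0
      rw [← heq, hval] at h
      rw [← hpm]
      exact h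
    obtain ⟨x, hxA, hxlt⟩ := exists_lt_of_csInf_lt
      (hAne (Γt \ {γ0}) Set.diff_subset) hlt
    obtain ⟨ρ', hρ'nn, hρ'feas, rfl⟩ := hxA
    set δ : ℝ := (∑ e, γ0 e * ρs e) - 1 with hδdef
    have hδ : 0 < δ := by simp only [hδdef]; linarith
    set t : ℝ := δ / (1 + δ) with htdef
    have ht0 : 0 < t := div_pos hδ (by linarith)
    have ht1 : t < 1 := by rw [htdef, div_lt_one (by linarith)]; linarith
    set ρt : E → ℝ := fun e => (1 - t) * ρs e + t * ρ' e with hρtdef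
    have hρtnn : ∀ e, 0 ≤ ρt e := fun e =>
      add_nonneg (mul_nonneg (by linarith) (hρsnn e)) (mul_nonneg ht0.le (hρ'nn e))
    have hdot : ∀ γ : E → ℝ,
        ∑ e, γ e * ρt e = (1 - t) * (∑ e, γ e * ρs e) + t * (∑ e, γ e * ρ' e) := by
      intro γ
      rw [Finset.mul_sum, Finset.mul_sum, ← Finset.sum_add_distrib]
      apply Finset.sum_congr rfl
      intro e _
      simp only [hρtdef]
      ring
    have hρtfeas : ∀ γ ∈ Γt, 1 ≤ ∑ e, γ e * ρt e := by
      intro γ hγ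
      rw [hdot γ]
      by_cases hγγ0 : γ = γ0
      · subst hγγ0
        have hγρ' : 0 ≤ ∑ e, γ e * ρ' e :=
          Finset.sum_nonneg fun e _ => mul_nonneg (hγnn γ hγ e) (hρ'nn e)
        have hone : (1 - t) * (1 + δ) = 1 := by
          rw [htdef]; field_simp; ring
        have hh : ∑ e, γ e * ρs e = 1 + δ := by simp only [hδdef]; ring
        rw [hh]
        linarith [mul_nonneg ht0.le hγρ', hone]
      · have h1 : 1 ≤ ∑ e, γ e * ρs e := hρsfeas γ hγ
        have h2 : 1 ≤ ∑ e, γ e * ρ' e := hρ'feas γ ⟨hγ, hγγ0⟩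
        nlinarith
    have hJρt : J ρt < J ρs := by
      have hcv := hJconv ρs ρ' hρsnn hρ'nn t ht0.le ht1.le
      have : J ρt ≤ (1 - t) * J ρs + t * J ρ' := hcv
      nlinarith
    have hle2 : pMod σ p Γt ≤ J ρt := by
      rw [hpm]
      exact csInf_le (hbdd Γt) ⟨ρt, hρtnn, hρtfeas, rfl⟩
    rw [hval] at hle2
    linarith
  -- enumeration of the subfamily
  haveI : Fintype ↥Γt := htfin.fintype
  set n : ℕ := Fintype.card ↥Γt with hndef
  set eqv : Fin n ≃ ↥Γt := (Fintype.equivFin ↥Γt).symm with heqvdef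
  set a : Fin n → E → ℝ := fun i => ((eqv i : ↥Γt) : E → ℝ) with hadef
  have hamem : ∀ i, a i ∈ Γt := fun i => (eqv i).2
  have hainj : Function.Injective a := by
    intro i j hij
    exact eqv.injective (Subtype.ext hij)
  have hasurj : ∀ γ ∈ Γt, ∃ i, a i = γ := by
    intro γ hγ
    refine ⟨eqv.symm ⟨γ, hγ⟩, ?_⟩
    simp [hadef]
  set g : E → ℝ := fun e => σ e * (p * ρs e ^ (p - 1)) with hgdef
  -- KKT multipliers exist
  have hKKT : ∃ lam : Fin n → ℝ, (∀ i, 0 ≤ lam i) ∧ ∀ e, g e = ∑ i, lam i * a i e := by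
    rcases farkas n a g with h | ⟨d, hd, hgd⟩
    · exact h
    exfalso
    set d' : E → ℝ := fun e => if ρs e = 0 then max (d e) 0 else d e with hd'def
    have hdle : ∀ e, d e ≤ d' e := by
      intro e
      simp only [hd'def]
      split_ifs with h
      · exact le_max_left _ _
      · exact le_refl _
    have hd'nn0 : ∀ e, ρs e = 0 → 0 ≤ d' e := by
      intro e h
      simp only [hd'def, if_pos h]
      exact le_max_right _ _
    have hgzero : ∀ e, ρs e = 0 → g e = 0 := by
      intro e h
      simp only [hgdef]
      rw [h, Real.zero_rpow (by linarith : p - 1 ≠ 0)]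
      ring
    have hgd' : ∑ e, g e * d' e < 0 := by
      have hsame : ∑ e, g e * d' e = ∑ e, g e * d e := by
        apply Finset.sum_congr rfl
        intro e _
        by_cases h : ρs e = 0
        · rw [hgzero e h]; ring
        · simp only [hd'def, if_neg h]
      rw [hsame]; exact hgd
    have had' : ∀ γ ∈ Γt, 0 ≤ ∑ e, γ e * d' e := by
      intro γ hγ
      obtain ⟨i, rfl⟩ := hasurj γ hγ
      calc (0:ℝ) ≤ ∑ e, a i e * d e := hd i
        _ ≤ ∑ e, a i e * d' e :=
          Finset.sum_le_sum fun e _ => mul_le_mul_of_nonneg_left (hdle e) (hγnn _ (hamem i) e)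
    set φ : ℝ → ℝ := fun t => ∑ e, σ e * (ρs e + t * d' e) ^ p with hφdef
    have hφpar : HasDerivAt φ (∑ e, g e * d' e) 0 := by
      apply HasDerivAt.fun_sum
      intro e _
      have h1 : HasDerivAt (fun t : ℝ => ρs e + t * d' e) (d' e) 0 := by
        simpa using (hasDerivAt_mul_const (d' e)).const_add (ρs e)
      have h2 := h1.rpow_const (p := p) (Or.inr hp.le)
      have h3 := h2.const_mul (σ e)
      convert h3 using 1
      · rfl
      simp only [hgdef]
      ring_nf
    have hev1 : ∀ᶠ t in nhdsWithin (0:ℝ) (Set.Ioi 0), φ t < φ 0 := by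
      have hslope := hasDerivAt_iff_tendsto_slope.mp hφpar
      have h1 : ∀ᶠ t in nhdsWithin (0:ℝ) {(0:ℝ)}ᶜ, slope φ 0 t < 0 :=
        hslope.eventually_lt_const hgd'
      have h2 : nhdsWithin (0:ℝ) (Set.Ioi 0) ≤ nhdsWithin (0:ℝ) {(0:ℝ)}ᶜ :=
        nhdsWithin_mono 0 (fun x hx => ne_of_gt hx)
      filter_upwards [h2 h1, eventually_mem_nhdsWithin] with t ht hmem
      have ht' : (0:ℝ) < t := hmem
      have hsl : slope φ 0 t = (φ t - φ 0) / t := by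
        rw [slope_def_field, sub_zero]
      rw [hsl] at ht
      have h4 := mul_neg_of_neg_of_pos ht ht'
      rw [div_mul_cancel₀ _ ht'.ne'] at h4
      linarith
    have hev2 : ∀ᶠ t in nhdsWithin (0:ℝ) (Set.Ioi 0), ∀ e, 0 ≤ ρs e + t * d' e := by
      rw [Filter.eventually_all]
      intro e
      rcases eq_or_lt_of_le (hρsnn e) with h0 | h0
      · filter_upwards [eventually_mem_nhdsWithin] with t ht
        have ht' : (0:ℝ) < t := ht
        have := mul_nonneg ht'.le (hd'nn0 e h0.symm)
        linarith [h0]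
      · have hcont : Continuous fun t : ℝ => ρs e + t * d' e :=
          continuous_const.add (continuous_id.mul continuous_const)
        have htend : Filter.Tendsto (fun t : ℝ => ρs e + t * d' e)
            (nhdsWithin (0:ℝ) (Set.Ioi 0)) (nhds (ρs e)) := by
          have h5 := (hcont.tendsto 0).mono_left (nhdsWithin_le_nhds (s := Set.Ioi (0:ℝ)))
          simpa using h5
        filter_upwards [htend.eventually_const_lt h0] with t ht
        exact ht.le
    obtain ⟨t, htlt, htnn, htpos⟩ := (hev1.and (hev2.and eventually_mem_nhdsWithin)).exists
    have htpos' : (0:ℝ) < t := htpos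
    set ρt : E → ℝ := fun e => ρs e + t * d' e with hρt2def
    have hfeas2 : ∀ γ ∈ Γt, 1 ≤ ∑ e, γ e * ρt e := by
      intro γ hγ
      have hexp : ∑ e, γ e * ρt e = (∑ e, γ e * ρs e) + t * ∑ e, γ e * d' e := by
        rw [Finset.mul_sum, ← Finset.sum_add_distrib]
        apply Finset.sum_congr rfl
        intro e _
        simp only [hρt2def]
        ring
      rw [hexp]
      have h6 := had' γ hγ
      have h7 := hρsfeas γ hγ
      nlinarith
    have hJρt2 : J ρt = φ t := by
      simp only [hJdef, hφdef]
      apply Finset.sum_congr rfl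
      intro e _
      rw [abs_of_nonneg (htnn e)]
    have hφ0 : φ 0 = J ρs := by
      simp only [hJdef, hφdef]
      apply Finset.sum_congr rfl
      intro e _
      rw [abs_of_nonneg (hρsnn e)]
      norm_num
    have hle3 : pMod σ p Γt ≤ J ρt := by
      rw [hpm]
      exact csInf_le (hbdd Γt) ⟨ρt, fun e => htnn e, hfeas2, rfl⟩
    rw [hval] at hle3
    rw [hJρt2] at hle3
    linarith [htlt, hφ0.le, hφ0.ge]
  obtain ⟨lam, hlamnn, hlamsum⟩ := hKKT
  have hLI : LinearIndependent ℝ (fun γ : Γt => (γ : E → ℝ)) := by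
    apply (linearIndependent_equiv eqv).mp
    show LinearIndependent ℝ a
    by_contra hdep
    obtain ⟨c, hcsum, i0, hci0⟩ := Fintype.not_linearIndependent_iff.mp hdep
    have hcsum' : ∀ e, ∑ i, c i * a i e = 0 := by
      intro e
      have h := congrFun hcsum e
      simpa [Finset.sum_apply] using h
    have hex : ∃ cc : Fin n → ℝ, (∀ e, ∑ i, cc i * a i e = 0) ∧ ∃ i, cc i < 0 := by
      rcases hci0.lt_or_gt with h | h
      · exact ⟨c, hcsum', ⟨i0, h⟩⟩
      · refine ⟨fun i => -c i, ?_, ⟨i0, by show -c i0 < 0; linarith⟩⟩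
        intro e
        have h2 : ∑ i, -c i * a i e = -∑ i, c i * a i e := by
          rw [← Finset.sum_neg_distrib]
          apply Finset.sum_congr rfl
          intro i _
          ring
        rw [h2, hcsum' e, neg_zero]
    obtain ⟨cc, hccsum, i0', hcc0⟩ := hex
    set T : Finset (Fin n) := Finset.univ.filter (fun i => cc i < 0) with hTdef
    have hTne : T.Nonempty := ⟨i0', by simp [hTdef, hcc0]⟩
    obtain ⟨i1, hi1T, hi1eq⟩ := T.exists_mem_eq_inf' hTne (fun i => lam i / (-cc i))
    set ε : ℝ := T.inf' hTne (fun i => lam i / (-cc i)) with hεdef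
    have hci1 : cc i1 < 0 := (Finset.mem_filter.mp hi1T).2
    have hε0 : 0 ≤ ε := by
      rw [hi1eq]
      exact div_nonneg (hlamnn i1) (by linarith)
    set lam' : Fin n → ℝ := fun i => lam i + ε * cc i with hlam'def
    have hlam'nn : ∀ i, 0 ≤ lam' i := by
      intro i
      simp only [hlam'def]
      by_cases hci : cc i < 0
      · have hle : ε ≤ lam i / (-cc i) := by
          rw [hεdef]
          exact Finset.inf'_le (fun i => lam i / (-cc i))
            (Finset.mem_filter.mpr ⟨Finset.mem_univ _, hci⟩)
        have h2 : ε * (-cc i) ≤ lam i := (le_div_iff₀ (by linarith : (0:ℝ) < -cc i)).mp hle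
        nlinarith
      · push_neg at hci
        exact add_nonneg (hlamnn i) (mul_nonneg hε0 hci)
    have hlam'i1 : lam' i1 = 0 := by
      have hεeq : ε = lam i1 / (-cc i1) := hi1eq
      simp only [hlam'def]
      rw [hεeq]
      field_simp [hci1.ne]
      ring
    have hg2 : ∀ e, g e = ∑ i, lam' i * a i e := by
      intro e
      rw [hlamsum e]
      have h2 : ∑ i, lam' i * a i e = ∑ i, lam i * a i e + ε * ∑ i, cc i * a i e := by
        rw [Finset.mul_sum, ← Finset.sum_add_distrib]
        apply Finset.sum_congr rfl
        intro i _
        simp only [hlam'def]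
        ring
      rw [h2, hccsum e, mul_zero, add_zero]
    set γ1 : E → ℝ := a i1 with hγ1def
    have hγ1mem : γ1 ∈ Γt := hamem i1
    have hlb : J ρs ≤ pMod σ p (Γt \ {γ1}) := by
      rw [hpm]
      apply le_csInf (hAne (Γt \ {γ1}) Set.diff_subset)
      rintro x ⟨ρ, hρnn, hρfeas, rfl⟩
      have key : ∀ e, σ e * ρs e ^ p + g e * (ρ e - ρs e) ≤ σ e * |ρ e| ^ p := by
        intro e
        rw [abs_of_nonneg (hρnn e)]
        have h1 := rpow_tangent hp (hρsnn e) (hρnn e)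
        have h2 := mul_le_mul_of_nonneg_left h1 (hσ e).le
        calc σ e * ρs e ^ p + g e * (ρ e - ρs e)
            = σ e * (ρs e ^ p + p * ρs e ^ (p - 1) * (ρ e - ρs e)) := by
              simp only [hgdef]; ring
          _ ≤ σ e * ρ e ^ p := h2
      have hsumkey := Finset.sum_le_sum (fun (e : E) (_ : e ∈ Finset.univ) => key e)
      have hsplit : ∑ e, (σ e * ρs e ^ p + g e * (ρ e - ρs e))
          = (∑ e, σ e * ρs e ^ p) + ((∑ e, g e * ρ e) - ∑ e, g e * ρs e) := by
        rw [Finset.sum_add_distrib]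
        congr 1
        rw [← Finset.sum_sub_distrib]
        apply Finset.sum_congr rfl
        intro e _
        ring
      have hJs : ∑ e, σ e * ρs e ^ p = J ρs := by
        simp only [hJdef]
        apply Finset.sum_congr rfl
        intro e _
        rw [abs_of_nonneg (hρsnn e)]
      have hswap : ∀ ρ'' : E → ℝ, ∑ e, g e * ρ'' e = ∑ i, lam' i * ∑ e, a i e * ρ'' e := by
        intro ρ''
        calc ∑ e, g e * ρ'' e = ∑ e, ∑ i, lam' i * a i e * ρ'' e := by
              apply Finset.sum_congr rfl
              intro e _
              rw [hg2 e, Finset.sum_mul]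
          _ = ∑ i, ∑ e, lam' i * a i e * ρ'' e := Finset.sum_comm
          _ = ∑ i, lam' i * ∑ e, a i e * ρ'' e := by
              apply Finset.sum_congr rfl
              intro i _
              rw [Finset.mul_sum]
              apply Finset.sum_congr rfl
              intro e _
              ring
      have h3 : ∑ e, g e * ρs e = ∑ i, lam' i := by
        rw [hswap ρs]
        apply Finset.sum_congr rfl
        intro i _
        rw [hactive (a i) (hamem i), mul_one]
      have h4 : ∑ i, lam' i ≤ ∑ e, g e * ρ e := by
        rw [hswap ρ]
        apply Finset.sum_le_sum
        intro i _
        by_cases hii : i = i1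
        · subst hii
          rw [hlam'i1]
          simp
        · have hne2 : a i ≠ γ1 := fun h => hii (hainj h)
          have h5 := hρfeas (a i) ⟨hamem i, hne2⟩
          calc lam' i = lam' i * 1 := (mul_one _).symm
            _ ≤ lam' i * ∑ e, a i e * ρ e := mul_le_mul_of_nonneg_left h5 (hlam'nn i)
      have hgoal : J ρs ≤ J ρ := by
        have h6 : ∑ e, σ e * |ρ e| ^ p = J ρ := rfl
        rw [h6] at hsumkey
        rw [hsplit, hJs] at hsumkey
        linarith
      exact hgoal
    have hcon := hmin γ1 hγ1mem
    rw [← heq, hval] at hcon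
    linarith
  refine ⟨hLI, ?_⟩
  have h1 : Fintype.card ↥Γt ≤ Module.finrank ℝ (E → ℝ) := hLI.fintype_card_le_finrank
  rw [Module.finrank_pi] at h1
  rwa [← Nat.card_coe_set_eq, Nat.card_eq_fintype_card]
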